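/- arXiv:1901.02190 — 3 statements merged into one kernel-verified Lean document; each statement's English description precedes it below -/
import Mathlib

section
/- Let ν be a Borel probability measure on ℝ, let κ ∈ ℝ, and let b, p, q : ℝ → ℝ be bounded Borel measurable functions. Suppose that for every z ∈ ℂ with Im z > 0: κ ∫ x/(z−x)² ν(dx) = ∫ b(x)/(z−x)² ν(dx) + (∫ p(x)/(z−x) ν(dx))·(∫ q(x)/(z−x)² ν(dx)) + (∫ q(x)/(z−x) ν(dx))·(∫ p(x)/(z−x)² ν(dx)). Then for every z ∈ ℂ with Im z > 0: κ ∫ x/(z−x) ν(dx) = ∫ b(x)/(z−x) ν(dx) + (∫ p(x)/(z−x) ν(dx))·(∫ q(x)/(z−x) ν(dx)). (All integrands are bounded functions of x for each fixed z with Im z > 0, so all integrals are well defined.) -/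
open MeasureTheory Filter

namespace Stmt5Aux

lemma im_le_abs_sub (w : ℂ) (x : ℝ) : w.im ≤ ‖w - x‖ := by
  have h := Complex.abs_im_le_norm (w - x)
  have : (w - (x : ℂ)).im = w.im := by simp
  rw [this] at h
  exact (le_abs_self _).trans h

lemma abs_sub_pos' (w : ℂ) (x : ℝ) (hw : 0 < w.im) : 0 < ‖w - x‖ :=
  lt_of_lt_of_le hw (im_le_abs_sub w x)

lemma key_bound (w : ℂ) (hw : 0 < w.im) (x : ℝ) :
    (1 + |x|) / ‖w - x‖ ≤ 1 + (1 + ‖w‖) / w.im := by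
  set a := ‖w - x‖ with ha
  have haim : w.im ≤ a := im_le_abs_sub w x
  have ha0 : 0 < a := lt_of_lt_of_le hw haim
  have hxa : |x| ≤ a + ‖w‖ := by
    have h1 : ‖(x : ℂ)‖ ≤ ‖(x : ℂ) - w‖ + ‖w‖ := by
      simpa using norm_add_le ((x : ℂ) - w) w
    have h2 : ‖(x : ℂ) - w‖ = a := by rw [ha, norm_sub_rev]
    simpa [Complex.norm_real, h2] using h1
  calc (1 + |x|) / a ≤ (1 + (a + ‖w‖)) / a := by gcongr
    _ = 1 + (1 + ‖w‖) / a := by field_simp; ring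
    _ ≤ 1 + (1 + ‖w‖) / w.im :=
        add_le_add_right (div_le_div_of_nonneg_left (by positivity) hw haim) 1

lemma norm_div_le (f : ℝ → ℂ) (C : ℝ) (hC0 : 0 ≤ C) (hC : ∀ x, ‖f x‖ ≤ C * (1 + |x|))
    (w : ℂ) (hw : 0 < w.im) (x : ℝ) :
    ‖f x / (w - x)‖ ≤ C * (1 + (1 + ‖w‖) / w.im) := by
  have ha0 : 0 < ‖w - x‖ := abs_sub_pos' w x hw
  rw [norm_div]
  calc ‖f x‖ / ‖w - x‖ ≤ (C * (1 + |x|)) / ‖w - x‖ := by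
        gcongr; exact hC x
    _ = C * ((1 + |x|) / ‖w - x‖) := by ring
    _ ≤ C * (1 + (1 + ‖w‖) / w.im) :=
        mul_le_mul_of_nonneg_left (key_bound w hw x) hC0

lemma norm_div_sq_le (f : ℝ → ℂ) (C : ℝ) (hC0 : 0 ≤ C) (hC : ∀ x, ‖f x‖ ≤ C * (1 + |x|))
    (w : ℂ) (hw : 0 < w.im) (x : ℝ) :
    ‖f x / (w - x) ^ 2‖ ≤ C * (1 + (1 + ‖w‖) / w.im) / w.im := by
  have ha0 : 0 < ‖w - x‖ := abs_sub_pos' w x hw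
  have h1 : f x / (w - x) ^ 2 = (f x / (w - x)) / (w - x) := by rw [div_div, pow_two]
  rw [h1, norm_div]
  have h2 : ‖f x / (w - x)‖ ≤ C * (1 + (1 + ‖w‖) / w.im) :=
    norm_div_le f C hC0 hC w hw x
  calc ‖f x / (w - x)‖ / ‖w - x‖
      ≤ (C * (1 + (1 + ‖w‖) / w.im)) / ‖w - x‖ := by gcongr
    _ ≤ (C * (1 + (1 + ‖w‖) / w.im)) / w.im := by
        have hXnn : 0 ≤ C * (1 + (1 + ‖w‖) / w.im) := by
          have h4 : 0 ≤ (1 + ‖w‖) / w.im :=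
            div_nonneg (by linarith [norm_nonneg w]) hw.le
          exact mul_nonneg hC0 (by linarith)
        exact div_le_div_of_nonneg_left hXnn hw (im_le_abs_sub w x)

lemma meas_div (ν : Measure ℝ) (f : ℝ → ℂ) (hf : Measurable f) (w : ℂ) :
    AEStronglyMeasurable (fun x : ℝ => f x / (w - x)) ν :=
  (hf.div (measurable_const.sub Complex.measurable_ofReal)).aestronglyMeasurable

lemma meas_div_sq (ν : Measure ℝ) (f : ℝ → ℂ) (hf : Measurable f) (w : ℂ) :
    AEStronglyMeasurable (fun x : ℝ => f x / (w - x) ^ 2) ν :=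
  (hf.div ((measurable_const.sub Complex.measurable_ofReal).pow_const 2)).aestronglyMeasurable

lemma integrable_div (ν : Measure ℝ) [IsProbabilityMeasure ν] (f : ℝ → ℂ)
    (hf : Measurable f) (C : ℝ) (hC0 : 0 ≤ C) (hC : ∀ x, ‖f x‖ ≤ C * (1 + |x|))
    (w : ℂ) (hw : 0 < w.im) :
    Integrable (fun x : ℝ => f x / (w - x)) ν :=
  (integrable_const (C * (1 + (1 + ‖w‖) / w.im))).mono'
    (meas_div ν f hf w) (ae_of_all _ fun x => norm_div_le f C hC0 hC w hw x)

/-- Differentiation under the integral sign for the Stieltjes-type transform. -/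
lemma hasDerivAt_T (ν : Measure ℝ) [IsProbabilityMeasure ν] (f : ℝ → ℂ)
    (hf : Measurable f) (C : ℝ) (hC0 : 0 ≤ C) (hC : ∀ x, ‖f x‖ ≤ C * (1 + |x|))
    (z : ℂ) (hz : 0 < z.im) :
    HasDerivAt (fun w : ℂ => ∫ x, f x / (w - x) ∂ν)
      (∫ x, -(f x / (z - x) ^ 2) ∂ν) z := by
  have hε : 0 < z.im / 2 := by positivity
  set ε : ℝ := z.im / 2 with hεdef
  set M : ℝ := C * (1 + (1 + (‖z‖ + ε)) / ε) / ε with hM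
  have hball : ∀ w ∈ Metric.ball z ε,
      ε ≤ w.im ∧ ‖w‖ ≤ ‖z‖ + ε := by
    intro w hwb
    rw [Metric.mem_ball, Complex.dist_eq] at hwb
    constructor
    · have h1 : |(w - z).im| ≤ ‖w - z‖ := Complex.abs_im_le_norm _
      have h2 : (w - z).im = w.im - z.im := by simp
      rw [h2] at h1
      have := abs_le.1 (h1.trans hwb.le)
      have := this.1
      rw [hεdef]; linarith
    · calc ‖w‖ = ‖z + (w - z)‖ := by ring_nf
        _ ≤ ‖z‖ + ‖w - z‖ := norm_add_le _ _
        _ ≤ ‖z‖ + ε := by linarith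
  have him : ∀ w ∈ Metric.ball z ε, 0 < w.im := fun w hwb =>
    lt_of_lt_of_le hε (hball w hwb).1
  have key := hasDerivAt_integral_of_dominated_loc_of_deriv_le (μ := ν)
    (F := fun w x => f x / (w - x)) (F' := fun w x => -(f x / (w - x) ^ 2))
    (x₀ := z) (bound := fun _ => M) (Metric.ball_mem_nhds z hε)
    (Filter.Eventually.of_forall fun w => meas_div ν f hf w)
    (integrable_div ν f hf C hC0 hC z hz)
    ((meas_div_sq ν f hf z).neg)
    (ae_of_all _ ?_)
    (integrable_const M)
    (ae_of_all _ ?_)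
  · exact key.2
  · -- bound
    intro x w hwb
    have hwim := him w hwb
    have h1 : ‖f x / (w - x) ^ 2‖ ≤ C * (1 + (1 + ‖w‖) / w.im) / w.im :=
      norm_div_sq_le f C hC0 hC w hwim x
    rw [norm_neg]
    refine h1.trans ?_
    rw [hM]
    have h2 := (hball w hwb).1
    have h3 := (hball w hwb).2
    have hz0 : 0 ≤ ‖z‖ := norm_nonneg z
    have hw0 : 0 ≤ ‖w‖ := norm_nonneg w
    have step1 : (1 + ‖w‖) / w.im ≤ (1 + (‖z‖ + ε)) / ε :=
      div_le_div₀ (by linarith) (by linarith) hε h2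
    have num : C * (1 + (1 + ‖w‖) / w.im)
        ≤ C * (1 + (1 + (‖z‖ + ε)) / ε) :=
      mul_le_mul_of_nonneg_left (by linarith) hC0
    have nn : 0 ≤ C * (1 + (1 + (‖z‖ + ε)) / ε) := by
      have hdiv : 0 ≤ (1 + (‖z‖ + ε)) / ε := div_nonneg (by linarith) hε.le
      exact mul_nonneg hC0 (by linarith)
    exact div_le_div₀ nn num hε h2
  · -- differentiability
    intro x w hwb
    have hwim := him w hwb
    have hne : w - (x : ℂ) ≠ 0 := by
      intro hcontra
      have h0 : (w - (x : ℂ)).im = 0 := by rw [hcontra]; simp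
      simp only [Complex.sub_im, Complex.ofReal_im, sub_zero] at h0
      linarith
    have h1 : HasDerivAt (fun w : ℂ => w - (x : ℂ)) 1 w := (hasDerivAt_id w).sub_const _
    have h2 := h1.inv hne
    have h3 := h2.const_mul (f x)
    have hfun : (fun w : ℂ => f x * (w - (x : ℂ))⁻¹) = fun w : ℂ => f x / (w - x) := by
      funext w; rw [div_eq_mul_inv]
    simp only [Pi.inv_apply] at h3
    rw [hfun] at h3
    refine h3.congr_deriv ?_
    rw [neg_div, mul_neg, mul_one_div]

/-- The transform vanishes as `z` goes up vertically. -/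
lemma tendsto_T (ν : Measure ℝ) [IsProbabilityMeasure ν] (f : ℝ → ℂ)
    (hf : Measurable f) (C : ℝ) (hC0 : 0 ≤ C) (hC : ∀ x, ‖f x‖ ≤ C * (1 + |x|))
    (z : ℂ) (hz : 0 < z.im) :
    Tendsto (fun t : ℝ => ∫ x, f x / (z + t * Complex.I - x) ∂ν) atTop (nhds 0) := by
  have him : ∀ t : ℝ, (z + t * Complex.I).im = z.im + t := by
    intro t; simp
  have key := tendsto_integral_filter_of_dominated_convergence (μ := ν)
    (l := atTop) (F := fun (t : ℝ) (x : ℝ) => f x / (z + t * Complex.I - x))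
    (f := fun _ => (0 : ℂ)) (bound := fun _ => C * (3 + ‖z‖))
    (Filter.Eventually.of_forall fun t => meas_div ν f hf _)
    ?_ (integrable_const _) ?_
  · simpa using key
  · -- uniform bound for t ≥ 1
    filter_upwards [eventually_ge_atTop (1 : ℝ)] with t ht
    refine ae_of_all _ fun x => ?_
    have hwim : 0 < (z + t * Complex.I).im := by rw [him]; linarith
    have h1 := norm_div_le f C hC0 hC (z + t * Complex.I) hwim x
    refine h1.trans ?_
    have habs : ‖z + t * Complex.I‖ ≤ ‖z‖ + t := by
      calc ‖z + t * Complex.I‖ ≤ ‖z‖ + ‖t * Complex.I‖ :=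
            norm_add_le _ _
        _ = ‖z‖ + |t| := by simp [Complex.norm_real]
        _ = ‖z‖ + t := by rw [abs_of_pos (by linarith)]
    have h2 : (1 + ‖z + t * Complex.I‖) / (z + t * Complex.I).im
        ≤ 2 + ‖z‖ := by
      rw [him]
      have ht0 : (0 : ℝ) < t := by linarith
      have hz0 : (0 : ℝ) < z.im + t := by linarith
      rw [div_le_iff₀ hz0]
      have hA : (0 : ℝ) ≤ ‖z‖ := norm_nonneg z
      nlinarith
    calc C * (1 + (1 + ‖z + t * Complex.I‖) / (z + t * Complex.I).im)
        ≤ C * (1 + (2 + ‖z‖)) := by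
          apply mul_le_mul_of_nonneg_left _ hC0
          linarith
      _ = C * (3 + ‖z‖) := by ring
  · -- pointwise limit
    refine ae_of_all _ fun x => ?_
    apply squeeze_zero_norm' (a := fun t : ℝ => ‖f x‖ / (z.im + t))
    · filter_upwards [eventually_ge_atTop (0 : ℝ)] with t ht
      have hpos : 0 < z.im + t := by linarith
      have h1 : z.im + t ≤ ‖z + t * Complex.I - x‖ := by
        rw [← him t]; exact im_le_abs_sub _ x
      rw [norm_div]
      exact div_le_div_of_nonneg_left (norm_nonneg _) hpos h1
    · exact Tendsto.div_atTop tendsto_const_nhds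
        (tendsto_atTop_add_const_left _ _ tendsto_id)


/-- The function whose vanishing is the first-order equation. -/
noncomputable def Ffun (ν : Measure ℝ) (κ : ℝ) (b p q : ℝ → ℝ) : ℂ → ℂ := fun w =>
  (κ : ℂ) * (∫ x, (x : ℂ) / (w - x) ∂ν) - (∫ x, (b x : ℂ) / (w - x) ∂ν)
    - (∫ x, (p x : ℂ) / (w - x) ∂ν) * (∫ x, (q x : ℂ) / (w - x) ∂ν)

end Stmt5Aux

open Stmt5Aux

/-- integrating the differentiated limit-measure equation: if the
second-order equation holds for all z in the upper half-plane, then so does the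
first-order equation. -/
theorem stmt5 (ν : Measure ℝ) [IsProbabilityMeasure ν] (κ : ℝ)
    (b p q : ℝ → ℝ) (hbm : Measurable b) (hpm : Measurable p) (hqm : Measurable q)
    (Cb Cp Cq : ℝ) (hbB : ∀ x, |b x| ≤ Cb) (hpB : ∀ x, |p x| ≤ Cp) (hqB : ∀ x, |q x| ≤ Cq)
    (h : ∀ z : ℂ, 0 < z.im →
      (κ : ℂ) * ∫ x, (x : ℂ) / (z - x) ^ 2 ∂ν =
        (∫ x, (b x : ℂ) / (z - x) ^ 2 ∂ν)
          + (∫ x, (p x : ℂ) / (z - x) ∂ν) * (∫ x, (q x : ℂ) / (z - x) ^ 2 ∂ν)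
          + (∫ x, (q x : ℂ) / (z - x) ∂ν) * (∫ x, (p x : ℂ) / (z - x) ^ 2 ∂ν)) :
    ∀ z : ℂ, 0 < z.im →
      (κ : ℂ) * ∫ x, (x : ℂ) / (z - x) ∂ν =
        (∫ x, (b x : ℂ) / (z - x) ∂ν)
          + (∫ x, (p x : ℂ) / (z - x) ∂ν) * (∫ x, (q x : ℂ) / (z - x) ∂ν) := by
  intro z hz
  have hCb0 : 0 ≤ Cb := le_trans (abs_nonneg _) (hbB 0)
  have hCp0 : 0 ≤ Cp := le_trans (abs_nonneg _) (hpB 0)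
  have hCq0 : 0 ≤ Cq := le_trans (abs_nonneg _) (hqB 0)
  have hfidm : Measurable (fun x : ℝ => (x : ℂ)) := Complex.measurable_ofReal
  have hfidB : ∀ x : ℝ, ‖(x : ℂ)‖ ≤ 1 * (1 + |x|) := fun x => by
    rw [Complex.norm_real, Real.norm_eq_abs, one_mul]; linarith [abs_nonneg x]
  have hfbm : Measurable (fun x : ℝ => ((b x : ℝ) : ℂ)) := Complex.measurable_ofReal.comp hbm
  have hfpm : Measurable (fun x : ℝ => ((p x : ℝ) : ℂ)) := Complex.measurable_ofReal.comp hpm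
  have hfqm : Measurable (fun x : ℝ => ((q x : ℝ) : ℂ)) := Complex.measurable_ofReal.comp hqm
  have hfbB : ∀ x : ℝ, ‖((b x : ℝ) : ℂ)‖ ≤ Cb * (1 + |x|) := fun x => by
    rw [Complex.norm_real, Real.norm_eq_abs]
    nlinarith [hbB x, abs_nonneg x, abs_nonneg (b x)]
  have hfpB : ∀ x : ℝ, ‖((p x : ℝ) : ℂ)‖ ≤ Cp * (1 + |x|) := fun x => by
    rw [Complex.norm_real, Real.norm_eq_abs]
    nlinarith [hpB x, abs_nonneg x, abs_nonneg (p x)]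
  have hfqB : ∀ x : ℝ, ‖((q x : ℝ) : ℂ)‖ ≤ Cq * (1 + |x|) := fun x => by
    rw [Complex.norm_real, Real.norm_eq_abs]
    nlinarith [hqB x, abs_nonneg x, abs_nonneg (q x)]
  -- the function F has zero derivative on the upper half-plane
  have hF0 : ∀ w : ℂ, 0 < w.im → HasDerivAt (Ffun ν κ b p q) 0 w := by
    intro w hw
    have hid := hasDerivAt_T ν (fun x : ℝ => (x : ℂ)) hfidm 1 zero_le_one hfidB w hw
    have hbD := hasDerivAt_T ν (fun x : ℝ => ((b x : ℝ) : ℂ)) hfbm Cb hCb0 hfbB w hw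
    have hpD := hasDerivAt_T ν (fun x : ℝ => ((p x : ℝ) : ℂ)) hfpm Cp hCp0 hfpB w hw
    have hqD := hasDerivAt_T ν (fun x : ℝ => ((q x : ℝ) : ℂ)) hfqm Cq hCq0 hfqB w hw
    have hD : HasDerivAt (Ffun ν κ b p q)
        ((κ : ℂ) * (∫ x, -((x : ℂ) / (w - x) ^ 2) ∂ν)
          - (∫ x, -((b x : ℂ) / (w - x) ^ 2) ∂ν)
          - ((∫ x, -((p x : ℂ) / (w - x) ^ 2) ∂ν) * (∫ x, (q x : ℂ) / (w - x) ∂ν)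
              + (∫ x, (p x : ℂ) / (w - x) ∂ν) * (∫ x, -((q x : ℂ) / (w - x) ^ 2) ∂ν))) w :=
      ((hid.const_mul ((κ : ℂ))).sub hbD).sub (hpD.mul hqD)
    have hzero : (κ : ℂ) * (∫ x, -((x : ℂ) / (w - x) ^ 2) ∂ν)
          - (∫ x, -((b x : ℂ) / (w - x) ^ 2) ∂ν)
          - ((∫ x, -((p x : ℂ) / (w - x) ^ 2) ∂ν) * (∫ x, (q x : ℂ) / (w - x) ∂ν)
              + (∫ x, (p x : ℂ) / (w - x) ∂ν) * (∫ x, -((q x : ℂ) / (w - x) ^ 2) ∂ν)) = 0 := by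
      rw [integral_neg, integral_neg, integral_neg, integral_neg]
      linear_combination - h w hw
    exact hzero ▸ hD
  -- F is constant on vertical rays
  have hline : ∀ T : ℝ, 0 ≤ T →
      Ffun ν κ b p q (z + T * Complex.I) = Ffun ν κ b p q z := by
    intro T hT
    have hds : ∀ t ∈ Set.uIcc (0 : ℝ) T,
        HasDerivAt (fun s : ℝ => Ffun ν κ b p q (z + s * Complex.I)) ((fun _ => (0 : ℂ)) t) t := by
      intro t ht
      rw [Set.uIcc_of_le hT] at ht
      have himt : 0 < (z + (t : ℂ) * Complex.I).im := by
        simp only [Complex.add_im, Complex.mul_im, Complex.ofReal_re, Complex.I_im,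
          Complex.ofReal_im, Complex.I_re, mul_zero, mul_one, zero_mul, add_zero, sub_zero]
        linarith [ht.1]
      have hinner : HasDerivAt (fun w : ℂ => z + w * Complex.I) Complex.I (t : ℂ) := by
        simpa using ((hasDerivAt_id ((t : ℂ))).mul_const Complex.I).const_add z
      have hcomp := (hF0 _ himt).comp ((t : ℂ)) hinner
      have hreal := hcomp.comp_ofReal
      simpa [Function.comp] using hreal
    have h2 := intervalIntegral.integral_eq_sub_of_hasDerivAt hds intervalIntegrable_const
    have h4 : (0 : ℂ) = Ffun ν κ b p q (z + T * Complex.I) - Ffun ν κ b p q z := by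
      simpa using h2
    exact (sub_eq_zero.mp h4.symm)
  -- F tends to 0 along the vertical ray
  have ht1 : Tendsto (fun T : ℝ => Ffun ν κ b p q (z + T * Complex.I)) atTop (nhds 0) := by
    have h1 := tendsto_T ν (fun x : ℝ => (x : ℂ)) hfidm 1 zero_le_one hfidB z hz
    have h2 := tendsto_T ν (fun x : ℝ => ((b x : ℝ) : ℂ)) hfbm Cb hCb0 hfbB z hz
    have h3 := tendsto_T ν (fun x : ℝ => ((p x : ℝ) : ℂ)) hfpm Cp hCp0 hfpB z hz
    have h4 := tendsto_T ν (fun x : ℝ => ((q x : ℝ) : ℂ)) hfqm Cq hCq0 hfqB z hz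
    have h5 := ((h1.const_mul ((κ : ℂ))).sub h2).sub (h3.mul h4)
    simpa [Ffun] using h5
  have ht2 : Tendsto (fun T : ℝ => Ffun ν κ b p q (z + T * Complex.I)) atTop
      (nhds (Ffun ν κ b p q z)) := by
    refine Tendsto.congr' ?_ tendsto_const_nhds
    filter_upwards [eventually_ge_atTop (0 : ℝ)] with T hT
    exact (hline T hT).symm
  have hFz : Ffun ν κ b p q z = 0 := tendsto_nhds_unique ht2 ht1
  have hfinal : (κ : ℂ) * (∫ x, (x : ℂ) / (z - x) ∂ν) - (∫ x, (b x : ℂ) / (z - x) ∂ν)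
      - (∫ x, (p x : ℂ) / (z - x) ∂ν) * (∫ x, (q x : ℂ) / (z - x) ∂ν) = 0 := hFz
  linear_combination hfinal
end

section
/- Let β > 0 and c ≥ 0 be real numbers, and let G be a ℂ-valued function defined for (t, z) with t ∈ (0, ∞) and z ∈ ℂ, Im z ≠ 0, satisfying β t z G(t,z)² + (β t (c−1) − z) G(t,z) + 1 = 0 for all such (t, z). Fix t₀ > 0 and z₀ with Im z₀ ≠ 0, and suppose t ↦ G(t, z₀) has derivative a at t₀ and z ↦ G(t₀, z) is complex differentiable at z₀ with derivative d. Then a = −β(c−1)·d − β·(G(t₀,z₀)² + 2 z₀ G(t₀,z₀)·d). -/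
/-- implicit differentiation of βtzG² + (βt(c−1) − z)G + 1 = 0 gives
∂ₜG = −β(c−1)∂_zG − β(G² + 2zG ∂_zG). -/
theorem stmt9 (β c : ℝ) (hβ : 0 < β) (hc : 0 ≤ c) (G : ℝ → ℂ → ℂ)
    (hG : ∀ t : ℝ, 0 < t → ∀ z : ℂ, z.im ≠ 0 →
      (β : ℂ) * (t : ℂ) * z * G t z ^ 2 + ((β : ℂ) * (t : ℂ) * ((c : ℂ) - 1) - z) * G t z + 1 = 0)
    (t₀ : ℝ) (ht₀ : 0 < t₀) (z₀ : ℂ) (hz₀ : z₀.im ≠ 0)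
    (a d : ℂ)
    (ha : HasDerivAt (fun t : ℝ => G t z₀) a t₀)
    (hd : HasDerivAt (fun z : ℂ => G t₀ z) d z₀) :
    a = -(β : ℂ) * ((c : ℂ) - 1) * d - (β : ℂ) * (G t₀ z₀ ^ 2 + 2 * z₀ * G t₀ z₀ * d) := by
  set G0 := G t₀ z₀ with hG0
  -- non-degeneracy
  have hquad : (β : ℂ) * (t₀ : ℂ) * z₀ * G0 ^ 2 + ((β : ℂ) * (t₀ : ℂ) * ((c : ℂ) - 1) - z₀) * G0 + 1 = 0 :=
    hG t₀ ht₀ z₀ hz₀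
  set D : ℂ := 2 * (β : ℂ) * (t₀ : ℂ) * z₀ * G0 + (β : ℂ) * (t₀ : ℂ) * ((c : ℂ) - 1) - z₀ with hD
  have hf1 : (z₀ - ((β * t₀ * (1 + Real.sqrt c) ^ 2 : ℝ) : ℂ)) ≠ 0 := by
    intro h
    apply hz₀
    rw [sub_eq_zero] at h
    rw [h]
    exact Complex.ofReal_im _
  have hf2 : (z₀ - ((β * t₀ * (1 - Real.sqrt c) ^ 2 : ℝ) : ℂ)) ≠ 0 := by
    intro h
    apply hz₀
    rw [sub_eq_zero] at h
    rw [h]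
    exact Complex.ofReal_im _
  have hDsq : D ^ 2 = (z₀ - ((β * t₀ * (1 + Real.sqrt c) ^ 2 : ℝ) : ℂ)) *
      (z₀ - ((β * t₀ * (1 - Real.sqrt c) ^ 2 : ℝ) : ℂ)) := by
    have hsc : ((Real.sqrt c : ℝ) : ℂ) ^ 2 = (c : ℂ) := by
      norm_cast
      exact Real.sq_sqrt hc
    push_cast
    linear_combination (4 * (β : ℂ) * (t₀ : ℂ) * z₀) * hquad +
      (2*(β:ℂ)*(t₀:ℂ)*z₀ - (β:ℂ)^2*(t₀:ℂ)^2*(c:ℂ)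
        - (β:ℂ)^2*(t₀:ℂ)^2*((Real.sqrt c : ℝ):ℂ)^2 + 2*(β:ℂ)^2*(t₀:ℂ)^2) * hsc
  have hDne : D ≠ 0 := by
    intro h
    rw [h] at hDsq
    exact (mul_ne_zero hf1 hf2) (by linear_combination -hDsq)
  -- derivative in t
  have hT : HasDerivAt (fun t : ℝ => (t : ℂ)) 1 t₀ := by
    simpa using (hasDerivAt_id t₀).ofReal_comp
  have hA := ((((hT.const_mul (β : ℂ)).mul_const z₀).mul (ha.mul ha)).add
      ((((hT.const_mul (β : ℂ)).mul_const ((c : ℂ) - 1)).sub_const z₀).mul ha)).add_const 1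
  have hFz : HasDerivAt (fun t : ℝ => (β : ℂ) * (t : ℂ) * z₀ * (G t z₀ * G t z₀) +
      ((β : ℂ) * (t : ℂ) * ((c : ℂ) - 1) - z₀) * G t z₀ + 1) 0 t₀ := by
    refine (hasDerivAt_const t₀ (0 : ℂ)).congr_of_eventuallyEq ?_
    filter_upwards [isOpen_Ioi.eventually_mem (Set.mem_Ioi.mpr ht₀)] with t ht
    linear_combination hG t ht z₀ hz₀
  have hE1 := hA.unique hFz
  -- derivative in z
  have hB := ((((hasDerivAt_id z₀).const_mul ((β : ℂ) * (t₀ : ℂ))).mul (hd.mul hd)).add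
      (((hasDerivAt_const z₀ ((β : ℂ) * (t₀ : ℂ) * ((c : ℂ) - 1))).sub (hasDerivAt_id z₀)).mul hd)).add_const 1
  have hGz : HasDerivAt (fun z : ℂ => (β : ℂ) * (t₀ : ℂ) * z * (G t₀ z * G t₀ z) +
      ((β : ℂ) * (t₀ : ℂ) * ((c : ℂ) - 1) - z) * G t₀ z + 1) 0 z₀ := by
    refine (hasDerivAt_const z₀ (0 : ℂ)).congr_of_eventuallyEq ?_
    have hop : IsOpen {z : ℂ | z.im ≠ 0} :=
      isOpen_compl_singleton.preimage Complex.continuous_im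
    filter_upwards [hop.eventually_mem hz₀] with z hz
    linear_combination hG t₀ ht₀ z hz
  have hE2 := hB.unique hGz
  simp only [id_eq, Pi.mul_apply, Pi.sub_apply] at hE1 hE2
  -- combine
  have key : (a - (-(β : ℂ) * ((c : ℂ) - 1) * d - (β : ℂ) * (G0 ^ 2 + 2 * z₀ * G0 * d))) * D = 0 := by
    rw [hD]
    linear_combination hE1 + ((β : ℂ) * ((c : ℂ) - 1) + 2 * (β : ℂ) * z₀ * G0) * hE2
  have h0 := (mul_eq_zero.mp key).resolve_right hDne
  linear_combination h0
end

section
/- Let μ_sc be the Borel measure on ℝ with density f(x) = (1/(2π))·√(max(4 − x², 0)) with respect to Lebesgue measure (the standard semicircle law). Then (i) μ_sc is a probability measure, and (ii) for every z ∈ ℂ with Im z ≠ 0, the Stieltjes transform S(z) = ∫_ℝ 1/(z−x) μ_sc(dx) satisfies S(z)² − z·S(z) + 1 = 0. -/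
open MeasureTheory intervalIntegral Set
open scoped NNReal ENNReal

noncomputable section

namespace Stmt10Aux

/-- semicircle density -/
def ρ (x : ℝ) : ℝ := (1 / (2 * Real.pi)) * Real.sqrt (max (4 - x ^ 2) 0)

lemma ρ_cont : Continuous ρ :=
  continuous_const.mul (Real.continuous_sqrt.comp
    ((continuous_const.sub (continuous_pow 2)).max continuous_const))

lemma ρ_nonneg (x : ℝ) : 0 ≤ ρ x :=
  mul_nonneg (by positivity) (Real.sqrt_nonneg _)

lemma ρ_zero {x : ℝ} (hx : x ∉ Icc (-2 : ℝ) 2) : ρ x = 0 := by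
  have h : 4 - x ^ 2 ≤ 0 := by
    simp only [mem_Icc, not_and_or, not_le] at hx
    rcases hx with h | h <;> nlinarith
  simp [ρ, max_eq_right h]

lemma ρ_integrable : Integrable ρ := by
  apply ρ_cont.integrable_of_hasCompactSupport
  exact HasCompactSupport.intro isCompact_Icc (fun x hx => ρ_zero hx)

lemma sqrt_four : Real.sqrt 4 = 2 := by
  rw [show (4 : ℝ) = 2 ^ 2 by norm_num, Real.sqrt_sq (by norm_num)]

lemma ρ_integral : ∫ x, ρ x = 1 := by
  rw [← setIntegral_eq_integral_of_forall_compl_eq_zero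
    (s := Icc (-2 : ℝ) 2) (fun x hx => ρ_zero hx)]
  rw [integral_Icc_eq_integral_Ioc,
    ← intervalIntegral.integral_of_le (by norm_num : (-2 : ℝ) ≤ 2)]
  have hcongr : ∀ x ∈ uIcc (-2 : ℝ) 2,
      ρ x = (1 / (2 * Real.pi)) * Real.sqrt (4 - x ^ 2) := by
    intro x hx
    rw [uIcc_of_le (by norm_num)] at hx
    have : 0 ≤ 4 - x ^ 2 := by nlinarith [hx.1, hx.2]
    simp [ρ, max_eq_left this]
  rw [intervalIntegral.integral_congr hcongr, intervalIntegral.integral_const_mul]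
  have key : ∫ x in (-2 : ℝ)..2, Real.sqrt (4 - x ^ 2) = 2 * Real.pi := by
    have h := intervalIntegral.integral_comp_mul_left
      (a := -1) (b := 1) (fun y => Real.sqrt (4 - y ^ 2)) (two_ne_zero)
    have lhs : ∫ x in (-1 : ℝ)..1, Real.sqrt (4 - (2 * x) ^ 2) = Real.pi := by
      have hc : ∀ x ∈ uIcc (-1 : ℝ) 1,
          Real.sqrt (4 - (2 * x) ^ 2) = 2 * Real.sqrt (1 - x ^ 2) := by
        intro x _
        rw [show (4 : ℝ) - (2 * x) ^ 2 = 4 * (1 - x ^ 2) by ring,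
          Real.sqrt_mul (by norm_num), sqrt_four]
      rw [intervalIntegral.integral_congr hc, intervalIntegral.integral_const_mul,
        integral_sqrt_one_sub_sq]
      ring
    rw [lhs] at h
    rw [show (2 : ℝ) * -1 = -2 by norm_num, show (2 : ℝ) * 1 = 2 by norm_num] at h
    have := h.symm
    rw [smul_eq_mul] at this
    linarith [this]
  rw [key]
  field_simp

lemma hne (z : ℂ) (hz : z.im ≠ 0) (r : ℝ) : z - (r : ℂ) ≠ 0 := by
  intro h
  apply hz
  have := congrArg Complex.im h
  simpa using this

lemma hne' (z : ℂ) (hz : z.im ≠ 0) (r : ℝ) : z - 2 * (r : ℂ) ≠ 0 := by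
  have h := hne z hz (2 * r)
  rwa [Complex.ofReal_mul, Complex.ofReal_ofNat] at h

/-- roots of w² - z w + 1 -/
lemma roots_exist (z : ℂ) (hz : z.im ≠ 0) :
    ∃ a b : ℂ, a * b = 1 ∧ a + b = z ∧ ‖a‖ < 1 ∧ 1 < ‖b‖ := by
  set d : ℂ := (z ^ 2 - 4) ^ ((2 : ℕ) : ℂ)⁻¹ with hd_def
  have hd : d ^ 2 = z ^ 2 - 4 :=
    Complex.cpow_nat_inv_pow (z ^ 2 - 4) (by norm_num)
  set a₀ : ℂ := (z - d) / 2
  set b₀ : ℂ := (z + d) / 2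
  have hab : a₀ * b₀ = 1 := by
    have : a₀ * b₀ = (z ^ 2 - d ^ 2) / 4 := by ring
    rw [this, hd]; ring
  have hsum : a₀ + b₀ = z := by ring
  have habs : ‖a₀‖ * ‖b₀‖ = 1 := by
    rw [← norm_mul, hab, norm_one]
  have hne1 : ∀ c : ℂ, c * (z - c) = 1 → ‖c‖ ≠ 1 := by
    intro c hc h1
    apply hz
    have hcne : c ≠ 0 := by
      intro h; rw [h] at hc; simp at hc
    have hinv : z - c = c⁻¹ := by
      field_simp
      linear_combination hc
    have hcinv : c⁻¹ = starRingEnd ℂ c := by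
      rw [Complex.inv_def, Complex.normSq_eq_norm_sq, h1]
      simp
    have hzz : z = c + starRingEnd ℂ c := by
      rw [← hcinv, ← hinv]; ring
    rw [hzz]
    simp [Complex.add_im, Complex.conj_im]
  have ha₀ : ‖a₀‖ ≠ 1 := by
    apply hne1
    have : z - a₀ = b₀ := by rw [← hsum]; ring
    rw [this]; exact hab
  have hb₀ : ‖b₀‖ ≠ 1 := by
    apply hne1
    have : z - b₀ = a₀ := by rw [← hsum]; ring
    rw [this]; linear_combination hab
  have ha₀pos : 0 < ‖a₀‖ := by
    rcases eq_or_lt_of_le (norm_nonneg a₀) with h | h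
    · exfalso; rw [← h] at habs; simp at habs
    · exact h
  rcases lt_or_gt_of_ne ha₀ with h | h
  · refine ⟨a₀, b₀, hab, hsum, h, ?_⟩
    by_contra hb
    push_neg at hb
    nlinarith [habs]
  · refine ⟨b₀, a₀, by linear_combination hab, by rw [← hsum]; ring, ?_, h⟩
    by_contra hb
    push_neg at hb
    nlinarith [habs]

end Stmt10Aux

open Stmt10Aux

/-- the semicircle law μ_sc with density (1/2π)√(max(4−x²,0)) is a
probability measure and its Stieltjes transform S(z) = ∫ 1/(z−x) dμ_sc satisfies
S(z)² − zS(z) + 1 = 0 for every nonreal z. -/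
theorem stmt10 (μ : Measure ℝ)
    (hμ : μ = volume.withDensity fun x : ℝ =>
      ENNReal.ofReal ((1 / (2 * Real.pi)) * Real.sqrt (max (4 - x ^ 2) 0))) :
    IsProbabilityMeasure μ ∧
      ∀ z : ℂ, z.im ≠ 0 →
        (∫ x : ℝ, 1 / (z - x) ∂μ) ^ 2 - z * (∫ x : ℝ, 1 / (z - x) ∂μ) + 1 = 0 := by
  have hρmeas : (fun x : ℝ => ENNReal.ofReal ((1 / (2 * Real.pi)) * Real.sqrt (max (4 - x ^ 2) 0)))
      = fun x : ℝ => ((ρ x).toNNReal : ℝ≥0∞) := rfl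
  constructor
  · constructor
    rw [hμ, hρmeas]
    rw [withDensity_apply _ MeasurableSet.univ, Measure.restrict_univ]
    have : ∀ x : ℝ, ((ρ x).toNNReal : ℝ≥0∞) = ENNReal.ofReal (ρ x) := fun x => rfl
    simp_rw [this]
    rw [← ofReal_integral_eq_lintegral_ofReal ρ_integrable
      (Filter.Eventually.of_forall ρ_nonneg), ρ_integral]
    simp
  · intro z hz
    have hπ : (Real.pi : ℂ) ≠ 0 := Complex.ofReal_ne_zero.2 Real.pi_ne_zero
    -- step 1: unfold withDensity
    have hS1 : (∫ x : ℝ, 1 / (z - x) ∂μ) = ∫ x : ℝ, ρ x • (1 / (z - (x : ℂ))) := by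
      rw [hμ, hρmeas, integral_withDensity_eq_integral_smul
        (ρ_cont.measurable.real_toNNReal) _]
      congr 1
      ext x
      rw [NNReal.smul_def, Real.coe_toNNReal _ (ρ_nonneg x)]
    set G : ℝ → ℂ := fun x => ρ x • (1 / (z - (x : ℂ))) with hG
    have hGcont : Continuous G := by
      apply ρ_cont.smul
      apply Continuous.div continuous_const
        (continuous_const.sub Complex.continuous_ofReal)
      exact fun x => hne z hz x
    -- step 2: restrict to [-2,2]
    have hS2 : (∫ x : ℝ, G x) = ∫ x in (-2 : ℝ)..2, G x := by
      rw [← setIntegral_eq_integral_of_forall_compl_eq_zero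
        (s := Icc (-2 : ℝ) 2) (fun x hx => by simp [hG, ρ_zero hx])]
      rw [integral_Icc_eq_integral_Ioc,
        ← intervalIntegral.integral_of_le (by norm_num : (-2 : ℝ) ≤ 2)]
    -- step 3: substitution x = 2 cos θ
    have hsub : (∫ x in (-2 : ℝ)..2, G x)
        = ∫ θ in (0 : ℝ)..Real.pi, (2 * Real.sin θ) • G (2 * Real.cos θ) := by
      have hderiv : ∀ θ ∈ uIcc (0 : ℝ) Real.pi,
          HasDerivAt (fun t => 2 * Real.cos t) (-2 * Real.sin θ) θ := by
        intro θ _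
        have := (Real.hasDerivAt_cos θ).const_mul (2 : ℝ)
        rw [show -2 * Real.sin θ = 2 * -Real.sin θ by ring]
        exact this
      have h := intervalIntegral.integral_comp_smul_deriv hderiv
        ((by fun_prop : Continuous fun θ : ℝ => -2 * Real.sin θ).continuousOn) hGcont
      simp only [Function.comp] at h
      rw [Real.cos_zero, Real.cos_pi] at h
      rw [show ((2 : ℝ) * 1) = 2 by norm_num, show ((2 : ℝ) * (-1)) = -2 by norm_num,
        intervalIntegral.integral_symm (-2 : ℝ) 2] at h
      have hLHS : (∫ θ in (0 : ℝ)..Real.pi, (-2 * Real.sin θ) • G (2 * Real.cos θ))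
          = -∫ θ in (0 : ℝ)..Real.pi, (2 * Real.sin θ) • G (2 * Real.cos θ) := by
        rw [← intervalIntegral.integral_neg]
        apply intervalIntegral.integral_congr
        intro θ _
        show (-2 * Real.sin θ) • G (2 * Real.cos θ)
          = -((2 * Real.sin θ) • G (2 * Real.cos θ))
        rw [show (-2 * Real.sin θ) = -(2 * Real.sin θ) from by ring, neg_smul]
      rw [hLHS] at h
      exact (neg_injective h).symm
    -- step 4: simplify integrand
    set g : ℝ → ℂ := fun θ => 1 / (z - 2 * (Real.cos θ : ℂ)) with hgdef
    have hgcont : Continuous g := by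
      apply Continuous.div continuous_const
      · exact continuous_const.sub (continuous_const.mul
          (Complex.continuous_ofReal.comp Real.continuous_cos))
      · exact fun θ => hne' z hz (Real.cos θ)
    have hS4 : (∫ θ in (0 : ℝ)..Real.pi, (2 * Real.sin θ) • G (2 * Real.cos θ))
        = ∫ θ in (0 : ℝ)..Real.pi,
            (((4 : ℂ) - z ^ 2) / (2 * Real.pi)) * g θ
              + (z / (2 * Real.pi) + (Real.cos θ : ℂ) / Real.pi) := by
      apply intervalIntegral.integral_congr
      intro θ hθ
      rw [uIcc_of_le Real.pi_pos.le] at hθ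
      have hsin : 0 ≤ Real.sin θ := Real.sin_nonneg_of_nonneg_of_le_pi hθ.1 hθ.2
      have hρval : ρ (2 * Real.cos θ) = (1 / (2 * Real.pi)) * (2 * Real.sin θ) := by
        unfold ρ
        rw [show (4 : ℝ) - (2 * Real.cos θ) ^ 2 = (2 * Real.sin θ) ^ 2 from by
          linear_combination -4 * Real.sin_sq_add_cos_sq θ]
        rw [max_eq_left (sq_nonneg _), Real.sqrt_sq (by positivity)]
      simp only [hG, hρval, smul_smul, hgdef]
      have hcoef : (2 * Real.sin θ) * ((1 / (2 * Real.pi)) * (2 * Real.sin θ))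
          = (2 / Real.pi) * Real.sin θ ^ 2 := by
        field_simp
      rw [hcoef]
      rw [Complex.real_smul]
      push_cast
      have hs2 : Complex.sin (θ : ℂ) ^ 2 = 1 - Complex.cos (θ : ℂ) ^ 2 := by
        linear_combination Complex.sin_sq_add_cos_sq (θ : ℂ)
      rw [hs2]
      have hzc' : z - 2 * Complex.cos (θ : ℂ) ≠ 0 := by
        rw [← Complex.ofReal_cos]
        exact hne' z hz (Real.cos θ)
      field_simp
      ring
    -- step 5: integrate term by term
    set I1 : ℂ := ∫ θ in (0 : ℝ)..Real.pi, g θ with hI1def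
    have hgint : ∀ c d : ℝ, IntervalIntegrable g volume c d :=
      fun c d => hgcont.intervalIntegrable c d
    have hcosint : IntervalIntegrable (fun θ : ℝ => (Real.cos θ : ℂ) / (Real.pi : ℂ))
        volume 0 Real.pi := by
      apply Continuous.intervalIntegrable
      fun_prop
    have hS5 : (∫ θ in (0 : ℝ)..Real.pi,
            (((4 : ℂ) - z ^ 2) / (2 * Real.pi)) * g θ
              + (z / (2 * Real.pi) + (Real.cos θ : ℂ) / Real.pi))
        = (((4 : ℂ) - z ^ 2) / (2 * Real.pi)) * I1 + z / 2 := by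
      rw [intervalIntegral.integral_add
        ((hgint 0 Real.pi).const_mul _)
        (IntervalIntegrable.add intervalIntegrable_const hcosint)]
      rw [intervalIntegral.integral_const_mul]
      congr 1
      rw [intervalIntegral.integral_add intervalIntegrable_const hcosint]
      have hc1 : (∫ _ in (0 : ℝ)..Real.pi, z / (2 * Real.pi)) = z / 2 := by
        rw [intervalIntegral.integral_const]
        rw [sub_zero, Complex.real_smul]
        field_simp
      have hc2 : (∫ θ in (0 : ℝ)..Real.pi, (Real.cos θ : ℂ) / Real.pi) = 0 := by
        simp_rw [div_eq_mul_inv]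
        rw [intervalIntegral.integral_mul_const]
        have : (∫ θ in (0 : ℝ)..Real.pi, ((Real.cos θ : ℝ) : ℂ))
            = ((∫ θ in (0 : ℝ)..Real.pi, Real.cos θ : ℝ) : ℂ) := by
          exact intervalIntegral.integral_ofReal
        rw [this, integral_cos]
        simp [Real.sin_pi]
      rw [hc1, hc2, add_zero]
    -- step 6: the roots a, b
    obtain ⟨a, b, hab, hsum, haAbs, hbAbs⟩ := roots_exist z hz
    have hDne : a - b ≠ 0 := by
      intro h
      have : a = b := by linear_combination h
      rw [this] at haAbs
      linarith
    -- step 7: Cauchy integral formula gives I2 * (a - b) = -2π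
    set I2 : ℂ := ∫ θ in (0 : ℝ)..(2 * Real.pi), g θ with hI2def
    have hI2 : I2 * (a - b) = -(2 * Real.pi) := by
      have hF : DifferentiableOn ℂ (fun w => (w - b)⁻¹) (Metric.closedBall 0 1) := by
        intro w hw
        have hwb : w - b ≠ 0 := by
          intro h
          have : w = b := by linear_combination h
          rw [Metric.mem_closedBall, Complex.dist_eq, sub_zero, this] at hw
          linarith
        exact ((differentiableAt_id.sub_const b).inv hwb).differentiableWithinAt
      have hmem : a ∈ Metric.ball (0 : ℂ) 1 := by
        rw [Metric.mem_ball, Complex.dist_eq, sub_zero]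
        exact haAbs
      have cauchy := hF.circleIntegral_sub_inv_smul hmem
      rw [circleIntegral] at cauchy
      have hkey : ∀ θ : ℝ, deriv (circleMap 0 1) θ •
          ((circleMap 0 1 θ - a)⁻¹ • (circleMap 0 1 θ - b)⁻¹)
          = -Complex.I * g θ := by
        intro θ
        rw [deriv_circleMap]
        set w : ℂ := circleMap 0 1 θ with hwdef
        have hw : w = Complex.exp (θ * Complex.I) := by
          simp [hwdef, circleMap]
        have hw0 : w ≠ 0 := by rw [hw]; exact Complex.exp_ne_zero _
        have hwc : w ^ 2 + 1 = w * (2 * (Real.cos θ : ℂ)) := by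
          rw [hw, Complex.exp_mul_I]
          rw [Complex.ofReal_cos]
          have h1 := Complex.sin_sq_add_cos_sq (θ : ℂ)
          linear_combination (Complex.sin (θ : ℂ)) ^ 2 * Complex.I_sq - h1
        have hfac : (w - a) * (w - b) = w * (2 * (Real.cos θ : ℂ) - z) := by
          linear_combination hwc - w * hsum + hab
        have hzc : z - 2 * (Real.cos θ : ℂ) ≠ 0 := hne' z hz (Real.cos θ)
        have hwa : w - a ≠ 0 := by
          intro h
          rw [h, zero_mul] at hfac
          exact (mul_ne_zero hw0 (fun hh => hzc (by linear_combination -hh))) hfac.symm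
        have hwb : w - b ≠ 0 := by
          intro h
          rw [h, mul_zero] at hfac
          exact (mul_ne_zero hw0 (fun hh => hzc (by linear_combination -hh))) hfac.symm
        simp only [smul_eq_mul, hgdef]
        have h6 : (w - a)⁻¹ * (w - b)⁻¹ = w⁻¹ * (2 * ((Real.cos θ : ℝ) : ℂ) - z)⁻¹ := by
          rw [← mul_inv, hfac, mul_inv]
        rw [h6]
        have h7 : (2 * ((Real.cos θ : ℝ) : ℂ) - z)⁻¹ = -(z - 2 * ((Real.cos θ : ℝ) : ℂ))⁻¹ := by
          rw [neg_inv, neg_sub]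
        have h8 : w * Complex.I * (w⁻¹ * (2 * ((Real.cos θ : ℝ) : ℂ) - z)⁻¹)
            = Complex.I * (w * w⁻¹) * (2 * ((Real.cos θ : ℝ) : ℂ) - z)⁻¹ := by ring
        rw [h8, mul_inv_cancel₀ hw0, mul_one, h7, one_div]
        ring
      simp_rw [hkey] at cauchy
      rw [intervalIntegral.integral_const_mul, ← hI2def, smul_eq_mul] at cauchy
      have e1 : (-Complex.I * I2) * (a - b)
          = (2 * (Real.pi : ℂ) * Complex.I * (a - b)⁻¹) * (a - b) := by rw [cauchy]
      have e2 : (2 * (Real.pi : ℂ) * Complex.I * (a - b)⁻¹) * (a - b)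
          = 2 * (Real.pi : ℂ) * Complex.I := by field_simp
      have e12 := e1.trans e2
      linear_combination Complex.I * e12 + (I2 * (a - b) + 2 * (Real.pi : ℂ)) * Complex.I_mul_I
    -- step 8: I2 = 2 * I1
    have hsplit : I2 = I1 + ∫ θ in Real.pi..(2 * Real.pi), g θ := by
      rw [hI2def, hI1def]
      exact (intervalIntegral.integral_add_adjacent_intervals
        (hgint 0 Real.pi) (hgint Real.pi (2 * Real.pi))).symm
    have hsecond : (∫ θ in Real.pi..(2 * Real.pi), g θ) = I1 := by
      have h := intervalIntegral.integral_comp_sub_left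
        (a := (0 : ℝ)) (b := Real.pi) g (2 * Real.pi)
      rw [show 2 * Real.pi - Real.pi = Real.pi by ring, sub_zero] at h
      rw [← h, hI1def]
      apply intervalIntegral.integral_congr
      intro θ _
      simp only [hgdef]
      have hcos : Real.cos (2 * Real.pi - θ) = Real.cos θ := by
        rw [Real.cos_sub]
        simp [Real.cos_two_pi, Real.sin_two_pi]
      rw [hcos]
    have hI2eq : I2 = 2 * I1 := by
      rw [hsplit, hsecond]; ring
    have hI1mul : I1 * (a - b) = -(Real.pi : ℂ) := by
      have : 2 * (I1 * (a - b)) = 2 * (-(Real.pi : ℂ)) := by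
        rw [← mul_assoc, ← hI2eq]
        rw [hI2]
        ring
      exact mul_left_cancel₀ two_ne_zero this
    -- step 9: conclude
    have hSval : (∫ x : ℝ, 1 / (z - x) ∂μ)
        = (((4 : ℂ) - z ^ 2) / (2 * Real.pi)) * I1 + z / 2 := by
      rw [hS1, hS2, hsub, hS4, hS5]
    have hD2 : (a - b) ^ 2 = z ^ 2 - 4 := by
      linear_combination (a + b + z) * hsum - 4 * hab
    have hI1val : I1 = -(Real.pi : ℂ) / (a - b) := by
      field_simp
      exact hI1mul
    have hSa : (∫ x : ℝ, 1 / (z - x) ∂μ) = a := by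
      rw [hSval, hI1val]
      field_simp
      linear_combination (-(z + 2 * a)) * hsum + 4 * hab
    rw [hSa]
    linear_combination a * hsum - hab

end
end
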